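/- arXiv:1705.07702 — 6 statements merged into one kernel-verified Lean document; each statement's English description precedes it below -/
import Mathlib

section
/- For every r ∈ R, the basic open set X_r = {Q primary : r ∉ √Q} is quasi-compact in the Zariski topology on Prim(R): if X_r ⊆ ⋃_{i∈λ} X_{s_i}, then there is a finite subset Δ ⊆ λ with X_r ⊆ ⋃_{j∈Δ} X_{s_j}. -/
theorem stmt_11 {R : Type*} [CommRing R] (r : R) {ι : Type*} (s : ι → R) :
    {Q : Ideal R | Q.IsPrimary ∧ r ∉ Q.radical} ⊆
        ⋃ i, {Q : Ideal R | Q.IsPrimary ∧ s i ∉ Q.radical} →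
      ∃ Δ : Finset ι, {Q : Ideal R | Q.IsPrimary ∧ r ∉ Q.radical} ⊆
        ⋃ j ∈ Δ, {Q : Ideal R | Q.IsPrimary ∧ s j ∉ Q.radical} := by
  intro h
  classical
  set I : Ideal R := Ideal.span (Set.range s) with hI
  have hr : r ∈ I.radical := by
    rw [Ideal.radical_eq_sInf]
    apply Ideal.mem_sInf.2
    rintro J ⟨hIJ, hJp⟩
    by_contra hrJ
    have hrrad : r ∉ J.radical := by rwa [hJp.radical]
    obtain ⟨t, _, hmem⟩ := Set.mem_iUnion.1 (h ⟨hJp.isPrimary, hrrad⟩)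
    exact hmem (Ideal.le_radical (hIJ (Ideal.subset_span ⟨t, rfl⟩)))
  obtain ⟨n, hn⟩ := hr
  rw [hI, Ideal.span, Finsupp.mem_span_range_iff_exists_finsupp] at hn
  obtain ⟨c, hc⟩ := hn
  refine ⟨c.support, fun Q hQ => ?_⟩
  by_contra hcon
  simp only [Set.mem_iUnion, Set.mem_setOf_eq, not_exists, not_and, not_not] at hcon
  have hpow : r ^ n ∈ Q.radical := by
    rw [← hc]
    apply Ideal.sum_mem
    intro j hj
    exact Ideal.mul_mem_left _ _ (hcon j hj hQ.1)
  exact hQ.2 (Ideal.mem_radical_of_pow_mem hpow)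
end

section
/- Prim(R) with the Zariski topology (closed sets V_rad(I)) is a quasi-compact topological space. -/
def PrimarySpectrum (R : Type*) [CommRing R] := {Q : Ideal R // Q.IsPrimary}

def primVRad {R : Type*} [CommRing R] (I : Ideal R) : Set (PrimarySpectrum R) :=
  {Q | I ≤ Q.1.radical}

instance (R : Type*) [CommRing R] : TopologicalSpace (PrimarySpectrum R) :=
  TopologicalSpace.generateFrom {U | ∃ I : Ideal R, U = (primVRad I)ᶜ}

/-- The map sending a primary ideal to its (prime) radical. -/
def primToPrime (R : Type*) [CommRing R] : PrimarySpectrum R → PrimeSpectrum R :=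
  fun Q => ⟨Q.1.radical, Ideal.isPrime_radical Q.2⟩

lemma primToPrime_preimage_zeroLocus {R : Type*} [CommRing R] (s : Set R) :
    primToPrime R ⁻¹' PrimeSpectrum.zeroLocus s = primVRad (Ideal.span s) := by
  ext Q
  simp only [Set.mem_preimage, PrimeSpectrum.mem_zeroLocus, primToPrime, primVRad,
    Set.mem_setOf_eq]
  exact ⟨fun h => Ideal.span_le.mpr h, fun h => Set.Subset.trans Ideal.subset_span h⟩

lemma primToPrime_inducing (R : Type*) [CommRing R] :
    Topology.IsInducing (primToPrime R) := by
  constructor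
  refine le_antisymm ?_ ?_
  · -- generateFrom ≤ induced, i.e. f is continuous
    rw [← continuous_iff_le_induced]
    constructor
    intro U hU
    obtain ⟨s, hs⟩ := (PrimeSpectrum.isOpen_iff U).mp hU
    have : primToPrime R ⁻¹' U = (primVRad (Ideal.span s))ᶜ := by
      rw [← primToPrime_preimage_zeroLocus, ← hs, ← Set.preimage_compl, compl_compl]
    rw [this]
    exact TopologicalSpace.GenerateOpen.basic _ ⟨Ideal.span s, rfl⟩
  · -- induced ≤ generateFrom
    apply le_generateFrom
    rintro U ⟨I, rfl⟩
    have : primVRad I = primToPrime R ⁻¹' PrimeSpectrum.zeroLocus (I : Set R) := by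
      rw [primToPrime_preimage_zeroLocus, Ideal.span_eq]
    rw [this, ← Set.preimage_compl]
    exact isOpen_induced (isOpen_compl_iff.mpr (PrimeSpectrum.isClosed_zeroLocus _))

lemma primToPrime_surjective (R : Type*) [CommRing R] :
    Function.Surjective (primToPrime R) := by
  intro P
  refine ⟨⟨P.asIdeal, P.isPrime.isPrimary⟩, ?_⟩
  apply PrimeSpectrum.ext
  exact P.isPrime.radical

theorem stmt_12 (R : Type*) [CommRing R] : CompactSpace (PrimarySpectrum R) := by
  constructor
  rw [(primToPrime_inducing R).isCompact_iff, Set.image_univ,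
    (primToPrime_surjective R).range_eq]
  exact isCompact_univ
end

section
/- If a commutative ring R in which every nonzero prime ideal is maximal has three distinct maximal ideals M₁, M₂, M₃, then R does not satisfy condition (*): there exist nonzero r, s₁, s₂ ∈ R with X_r ⊆ X_{s₁} ∪ X_{s₂} but X_r ⊄ X_{s₁} and X_r ⊄ X_{s₂}. -/
theorem stmt_13 {R : Type*} [CommRing R]
    (hpm : ∀ P : Ideal R, P.IsPrime → P ≠ ⊥ → P.IsMaximal)
    (M₁ M₂ M₃ : Ideal R) (h₁ : M₁.IsMaximal) (h₂ : M₂.IsMaximal) (h₃ : M₃.IsMaximal)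
    (h₁₂ : M₁ ≠ M₂) (h₁₃ : M₁ ≠ M₃) (h₂₃ : M₂ ≠ M₃) :
    ∃ r s₁ s₂ : R, r ≠ 0 ∧ s₁ ≠ 0 ∧ s₂ ≠ 0 ∧
      {Q : Ideal R | Q.IsPrimary ∧ r ∉ Q.radical} ⊆
        {Q : Ideal R | Q.IsPrimary ∧ s₁ ∉ Q.radical} ∪
          {Q : Ideal R | Q.IsPrimary ∧ s₂ ∉ Q.radical} ∧
      ¬ {Q : Ideal R | Q.IsPrimary ∧ r ∉ Q.radical} ⊆
          {Q : Ideal R | Q.IsPrimary ∧ s₁ ∉ Q.radical} ∧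
      ¬ {Q : Ideal R | Q.IsPrimary ∧ r ∉ Q.radical} ⊆
          {Q : Ideal R | Q.IsPrimary ∧ s₂ ∉ Q.radical} := by
  -- M₁ ⊄ M₂ and M₂ ⊄ M₁
  have hn12 : ¬ M₁ ≤ M₂ := fun h => h₁₂ (h₁.eq_of_le h₂.ne_top h)
  have hn21 : ¬ M₂ ≤ M₁ := fun h => h₁₂ (h₂.eq_of_le h₁.ne_top h).symm
  obtain ⟨s₁, hs₁M₁, hs₁M₂⟩ := SetLike.not_le_iff_exists.mp hn12
  obtain ⟨s₂, hs₂M₂, hs₂M₁⟩ := SetLike.not_le_iff_exists.mp hn21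
  have hs₁0 : s₁ ≠ 0 := fun h => hs₁M₂ (h ▸ M₂.zero_mem)
  have hs₂0 : s₂ ≠ 0 := fun h => hs₂M₁ (h ▸ M₁.zero_mem)
  have hr0 : s₁ + s₂ ≠ 0 := by
    intro h
    have : s₁ = -s₂ := eq_neg_of_add_eq_zero_left h
    exact hs₁M₂ (this ▸ M₂.neg_mem hs₂M₂)
  have hrad₁ : M₁.radical = M₁ := h₁.isPrime.radical
  have hrad₂ : M₂.radical = M₂ := h₂.isPrime.radical
  refine ⟨s₁ + s₂, s₁, s₂, hr0, hs₁0, hs₂0, ?_, ?_, ?_⟩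
  · rintro Q ⟨hQ, hr⟩
    by_cases h1 : s₁ ∈ Q.radical
    · by_cases h2 : s₂ ∈ Q.radical
      · exact absurd (Q.radical.add_mem h1 h2) hr
      · exact Or.inr ⟨hQ, h2⟩
    · exact Or.inl ⟨hQ, h1⟩
  · intro h
    have := h (show M₁ ∈ _ from ⟨h₁.isPrime.isPrimary, by
      rw [hrad₁]; intro hm; exact hs₂M₁ (by simpa using M₁.sub_mem hm hs₁M₁)⟩)
    exact this.2 (by rw [hrad₁]; exact hs₁M₁)
  · intro h
    have := h (show M₂ ∈ _ from ⟨h₂.isPrime.isPrimary, by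
      rw [hrad₂]; intro hm; exact hs₁M₂ (by simpa using M₂.sub_mem hm hs₂M₂)⟩)
    exact this.2 (by rw [hrad₂]; exact hs₂M₂)
end

section
/- A commutative ring R is a P-ring (every primary ideal is maximal) if and only if Prim(R) is a T₀-space. -/
/-- Points of the primary spectrum with equal radicals are inseparable. -/
lemma inseparable_of_radical_eq {R : Type*} [CommRing R] (x y : PrimarySpectrum R)
    (h : x.1.radical = y.1.radical) : Inseparable x y := by
  rw [inseparable_iff_forall_isOpen]
  intro s hs
  have hs' : TopologicalSpace.GenerateOpen {U | ∃ I : Ideal R, U = (primVRad I)ᶜ} s := hs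
  clear hs
  induction hs' with
  | basic U hU => obtain ⟨I, rfl⟩ := hU; simp [primVRad, h]
  | univ => simp
  | inter U V _ _ ihU ihV => exact and_congr ihU ihV
  | sUnion S hS ih =>
      simp only [Set.mem_sUnion]
      exact ⟨fun ⟨t, ht, hx⟩ => ⟨t, ht, (ih t ht).1 hx⟩,
        fun ⟨t, ht, hy⟩ => ⟨t, ht, (ih t ht).2 hy⟩⟩

/-- The saturation of `I` at a prime `p`. -/
def satIdeal {R : Type*} [CommRing R] (I p : Ideal R) (hp : p.IsPrime) : Ideal R where
  carrier := {x | ∃ s ∉ p, s * x ∈ I}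
  zero_mem' := ⟨1, fun h => hp.ne_top (Ideal.eq_top_of_isUnit_mem _ h isUnit_one), by simp⟩
  add_mem' := by
    rintro a b ⟨s, hs, hsa⟩ ⟨t, ht, htb⟩
    refine ⟨s * t, fun h => ((hp.mem_or_mem h).elim hs ht), ?_⟩
    have : s * t * (a + b) = t * (s * a) + s * (t * b) := by ring
    rw [this]
    exact Ideal.add_mem _ (Ideal.mul_mem_left _ _ hsa) (Ideal.mul_mem_left _ _ htb)
  smul_mem' := by
    rintro c a ⟨s, hs, hsa⟩
    refine ⟨s, hs, ?_⟩
    rw [smul_eq_mul, show s * (c * a) = c * (s * a) by ring]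
    exact Ideal.mul_mem_left _ _ hsa

lemma minimal_saturation {R : Type*} [CommRing R] {I p : Ideal R}
    (hp : p ∈ I.minimalPrimes) {x : R} (hx : x ∈ p) :
    ∃ n : ℕ, ∃ s ∉ p, s * x ^ n ∈ I := by
  by_contra hcon
  push_neg at hcon
  -- the submonoid of elements s * x^n with s ∉ p
  set T : Submonoid R :=
    { carrier := {r | ∃ s ∉ p, ∃ n : ℕ, r = s * x ^ n}
      one_mem' := ⟨1, fun h => hp.1.1.ne_top (Ideal.eq_top_of_isUnit_mem _ h isUnit_one),
        0, by simp⟩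
      mul_mem' := by
        rintro a b ⟨s, hs, n, rfl⟩ ⟨t, ht, m, rfl⟩
        exact ⟨s * t, fun h => ((hp.1.1.mem_or_mem h).elim hs ht), n + m, by ring⟩ } with hT
  have hdisj : Disjoint (I : Set R) (T : Set R) := by
    rw [Set.disjoint_left]
    rintro r hrI ⟨s, hs, n, rfl⟩
    exact hcon n s hs hrI
  obtain ⟨q, hq, hIq, hqT⟩ := Ideal.exists_le_prime_disjoint I T hdisj
  have hqp : q ≤ p := by
    intro y hy
    by_contra hyp
    exact Set.disjoint_left.mp hqT hy ⟨y, hyp, 0, by simp⟩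
  have hpq : p ≤ q := hp.2 ⟨hq, hIq⟩ hqp
  have hone : (1 : R) ∉ p := fun h => hp.1.1.ne_top (Ideal.eq_top_of_isUnit_mem _ h isUnit_one)
  exact Set.disjoint_left.mp hqT (hpq hx) ⟨1, hone, 1, by simp⟩

lemma satIdeal_isPrimary {R : Type*} [CommRing R] {I p : Ideal R}
    (hp : p ∈ I.minimalPrimes) :
    (satIdeal I p hp.1.1).IsPrimary ∧ (satIdeal I p hp.1.1).radical = p := by
  have hprime := hp.1.1
  have hone : (1 : R) ∉ p := fun h => hprime.ne_top (Ideal.eq_top_of_isUnit_mem _ h isUnit_one)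
  have hQp : satIdeal I p hp.1.1 ≤ p := by
    rintro x ⟨s, hs, hsx⟩
    exact (hprime.mem_or_mem (hp.1.2 hsx)).resolve_left hs
  have hrad : (satIdeal I p hp.1.1).radical = p := by
    apply le_antisymm
    · have h := Ideal.radical_mono hQp
      rwa [hprime.radical] at h
    · intro x hx
      obtain ⟨n, s, hs, hsx⟩ := minimal_saturation hp hx
      exact ⟨n, s, hs, hsx⟩
  refine ⟨Ideal.isPrimary_iff.mpr ⟨?_, ?_⟩, hrad⟩
  · intro htop
    have : (1 : R) ∈ satIdeal I p hp.1.1 := htop ▸ Submodule.mem_top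
    exact hone (hQp this)
  · rintro x y ⟨s, hs, hsxy⟩
    by_cases hy : y ∈ p
    · exact Or.inr (by rw [hrad]; exact hy)
    · refine Or.inl ⟨s * y, fun h => ((hprime.mem_or_mem h).elim hs hy), ?_⟩
      rw [show s * y * x = s * (x * y) by ring]
      exact hsxy

theorem stmt_17 (R : Type*) [CommRing R] :
    (∀ Q : Ideal R, Q.IsPrimary → Q.IsMaximal) ↔ T0Space (PrimarySpectrum R) := by
  constructor
  · intro hmax
    refine ⟨fun {x y} h => ?_⟩
    have hradx : x.1.radical = x.1 := ((hmax x.1 x.2).isPrime).radical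
    have hrady : y.1.radical = y.1 := ((hmax y.1 y.2).isPrime).radical
    have hx : ∀ I : Ideal R, x ∈ primVRad I ↔ y ∈ primVRad I := by
      intro I
      have hopen : IsOpen ((primVRad I)ᶜ : Set (PrimarySpectrum R)) :=
        TopologicalSpace.GenerateOpen.basic _ ⟨I, rfl⟩
      have := h.mem_open_iff hopen
      simpa using this.not
    have h1 : x.1 ≤ y.1 := by
      have := (hx x.1).1 (Ideal.le_radical)
      rwa [primVRad, Set.mem_setOf_eq, hrady] at this
    have h2 : y.1 ≤ x.1 := by
      have := (hx y.1).2 (Ideal.le_radical)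
      rwa [primVRad, Set.mem_setOf_eq, hradx] at this
    exact Subtype.ext (le_antisymm h1 h2)
  · intro ht
    -- first: every primary ideal is prime
    have hprime : ∀ Q : Ideal R, Q.IsPrimary → Q.IsPrime := by
      intro Q hQ
      have hradQ : Q.radical.IsPrimary := (Ideal.isPrime_radical hQ).isPrimary
      have : (⟨Q, hQ⟩ : PrimarySpectrum R) = ⟨Q.radical, hradQ⟩ := by
        exact ht.t0 (inseparable_of_radical_eq _ _ (by simp [Ideal.radical_idem]))
      have hQ' : Q = Q.radical := congrArg Subtype.val this
      rw [hQ']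
      exact Ideal.isPrime_radical hQ
    intro Q hQ
    have hP : Q.IsPrime := hprime Q hQ
    by_contra hnotmax
    obtain ⟨M, hM, hQM⟩ := Ideal.exists_le_maximal Q hP.ne_top
    have hQneM : Q ≠ M := fun h => hnotmax (h ▸ hM)
    obtain ⟨a, haM, haQ⟩ := SetLike.exists_of_lt (lt_of_le_of_ne hQM hQneM)
    set I : Ideal R := Q ⊔ Ideal.span {a ^ 2} with hI
    have hIM : I ≤ M := sup_le hQM ((Ideal.span_singleton_le_iff_mem _).mpr (Ideal.pow_mem_of_mem _ haM 2 (by norm_num)))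
    obtain ⟨p, hp, hpM⟩ := Ideal.exists_minimalPrimes_le (J := M) hIM
    obtain ⟨hQ'prim, hQ'rad⟩ := satIdeal_isPrimary hp
    -- the saturation is primary, hence prime, hence equals p
    have hQ'prime : (satIdeal I p hp.1.1).IsPrime := hprime _ hQ'prim
    have hQ'eq : satIdeal I p hp.1.1 = p := by rw [← hQ'prime.radical, hQ'rad]
    have hap : a ∈ p := hp.1.1.mem_of_pow_mem 2
      (hp.1.2 (Ideal.mem_sup_right (Ideal.subset_span rfl)))
    rw [← hQ'eq] at hap
    obtain ⟨s, hs, hsa⟩ := hap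
    -- s * a ∈ Q ⊔ span {a^2}
    rw [Submodule.mem_sup] at hsa
    obtain ⟨y, hy, z, hz, hyz⟩ := hsa
    rw [Ideal.mem_span_singleton'] at hz
    obtain ⟨t, rfl⟩ := hz
    have hfac : (s - t * a) * a ∈ Q := by
      have : (s - t * a) * a = s * a - t * a ^ 2 := by ring
      rw [this, ← hyz]
      simpa using hy
    have hsta : s - t * a ∈ Q := (hP.mem_or_mem hfac).resolve_right haQ
    have hsp : s ∈ p := by
      have h1 : s - t * a ∈ p := hp.1.2 (Ideal.mem_sup_left hsta)
      have h2 : t * a ∈ p := Ideal.mul_mem_left _ _ (hp.1.1.mem_of_pow_mem 2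
        (hp.1.2 (Ideal.mem_sup_right (Ideal.subset_span rfl))))
      simpa using Ideal.add_mem _ h1 h2
    exact hs hsp
end

section
/- Prim(R) is an irreducible topological space if and only if the nilradical N(R) of R is a primary ideal of R. -/
lemma nil_le_rad {R : Type*} [CommRing R] (Q : Ideal R) : nilradical R ≤ Q.radical :=
  Ideal.radical_mono bot_le

lemma nil_rad_eq {R : Type*} [CommRing R] : (nilradical R).radical = nilradical R :=
  Ideal.radical_idem (0 : Ideal R)

theorem stmt_18 (R : Type*) [CommRing R] :
    IrreducibleSpace (PrimarySpectrum R) ↔ (nilradical R).IsPrimary := by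
  rw [Ideal.isPrimary_iff]
  constructor
  · intro h
    constructor
    · -- nilradical ≠ ⊤
      obtain ⟨Q⟩ := h.toNonempty
      intro htop
      have hle : (⊤ : Ideal R) ≤ Q.1.radical := htop ▸ nil_le_rad Q.1
      exact Q.2.1 (Ideal.radical_eq_top.mp (top_le_iff.mp hle))
    · intro x y hxy
      by_contra hc
      push_neg at hc
      obtain ⟨hx, hy⟩ := hc
      rw [nil_rad_eq] at hy
      -- find primes avoiding x and y
      have hpx : ∃ p : Ideal R, p.IsPrime ∧ x ∉ p := by
        by_contra hcc
        push_neg at hcc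
        exact hx (by rw [nilradical_eq_sInf]; exact Ideal.mem_sInf.mpr fun p hp => hcc p hp)
      have hpy : ∃ p : Ideal R, p.IsPrime ∧ y ∉ p := by
        by_contra hcc
        push_neg at hcc
        exact hy (by rw [nilradical_eq_sInf]; exact Ideal.mem_sInf.mpr fun p hp => hcc p hp)
      obtain ⟨p, hp, hxp⟩ := hpx
      obtain ⟨q, hq, hyq⟩ := hpy
      have hUx : IsOpen ((primVRad (Ideal.span {x}))ᶜ) :=
        TopologicalSpace.GenerateOpen.basic _ ⟨Ideal.span {x}, rfl⟩
      have hUy : IsOpen ((primVRad (Ideal.span {y}))ᶜ) :=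
        TopologicalSpace.GenerateOpen.basic _ ⟨Ideal.span {y}, rfl⟩
      have hnx : (Set.univ ∩ (primVRad (Ideal.span {x}))ᶜ).Nonempty := by
        refine ⟨⟨p, hp.isPrimary⟩, trivial, fun hmem => hxp ?_⟩
        have := hmem (Ideal.subset_span (Set.mem_singleton x))
        rwa [hp.radical] at this
      have hny : (Set.univ ∩ (primVRad (Ideal.span {y}))ᶜ).Nonempty := by
        refine ⟨⟨q, hq.isPrimary⟩, trivial, fun hmem => hyq ?_⟩
        have := hmem (Ideal.subset_span (Set.mem_singleton y))
        rwa [hq.radical] at this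
      obtain ⟨Q, -, hQx, hQy⟩ :=
        h.isPreirreducible_univ _ _ hUx hUy hnx hny
      have hxyQ : x * y ∈ Q.1.radical := nil_le_rad Q.1 hxy
      have hprime : Q.1.radical.IsPrime := Ideal.isPrime_radical Q.2
      rcases hprime.mem_or_mem hxyQ with hxQ | hyQ
      · exact hQx fun z hz => by
          rcases Ideal.mem_span_singleton.mp hz with ⟨c, rfl⟩
          exact Ideal.mul_mem_right c _ hxQ
      · exact hQy fun z hz => by
          rcases Ideal.mem_span_singleton.mp hz with ⟨c, rfl⟩
          exact Ideal.mul_mem_right c _ hyQ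
  · intro h'
    have h : (nilradical R).IsPrimary := Ideal.isPrimary_iff.mpr h'
    have key : ∀ U : Set (PrimarySpectrum R),
        TopologicalSpace.GenerateOpen {U | ∃ I : Ideal R, U = (primVRad I)ᶜ} U →
        U.Nonempty → (⟨nilradical R, h⟩ : PrimarySpectrum R) ∈ U := by
      intro U hU
      induction hU with
      | basic U hU =>
        obtain ⟨I, rfl⟩ := hU
        rintro ⟨Q, hQ⟩
        intro hmem
        have h1 : I ≤ nilradical R :=
          le_trans (hmem : I ≤ (nilradical R).radical) nil_rad_eq.le
        exact hQ (le_trans h1 (nil_le_rad Q.1))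
      | univ => intro _; trivial
      | inter u v _ _ ihu ihv =>
        rintro ⟨z, hzu, hzv⟩
        exact ⟨ihu ⟨z, hzu⟩, ihv ⟨z, hzv⟩⟩
      | sUnion S _ ih =>
        rintro ⟨z, t, htS, hzt⟩
        exact ⟨t, htS, ih t htS ⟨z, hzt⟩⟩
    have pre : IsPreirreducible (Set.univ : Set (PrimarySpectrum R)) := by
      rintro u v hu hv ⟨a, -, ha⟩ ⟨b, -, hb⟩
      exact ⟨_, trivial, key u hu ⟨a, ha⟩, key v hv ⟨b, hb⟩⟩
    exact { isPreirreducible_univ := pre, toNonempty := ⟨⟨nilradical R, h⟩⟩ }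
end

section
/- A commutative ring R is local (has a unique maximal ideal) if and only if Prim(R) is supercompact, i.e., every open covering of Prim(R) contains Prim(R) itself as a member. -/
theorem stmt_19 (R : Type*) [CommRing R] [Nontrivial R] :
    (∃! M : Ideal R, M.IsMaximal) ↔
      ∀ 𝒰 : Set (Set (PrimarySpectrum R)), (∀ U ∈ 𝒰, IsOpen U) →
        ⋃₀ 𝒰 = Set.univ → Set.univ ∈ 𝒰 := by
  constructor
  · rintro ⟨M, hM, hun⟩ 𝒰 hopen hcov
    have hMprim : M.IsPrimary := hM.isPrime.isPrimary
    set x : PrimarySpectrum R := ⟨M, hMprim⟩ with hxdef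
    have hx : x ∈ ⋃₀ 𝒰 := by rw [hcov]; trivial
    obtain ⟨U, hU𝒰, hxU⟩ := hx
    have key : ∀ V : Set (PrimarySpectrum R),
        TopologicalSpace.GenerateOpen {U | ∃ I : Ideal R, U = (primVRad I)ᶜ} V →
        x ∈ V → V = Set.univ := by
      intro V hV
      induction hV with
      | basic V hVb =>
          intro hxV
          obtain ⟨I, rfl⟩ := hVb
          have hIM : ¬ I ≤ M := by
            intro h
            exact hxV (h.trans M.le_radical)
          ext Q
          simp only [Set.mem_compl_iff, Set.mem_univ, iff_true]
          intro hQ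
          have hQtop : Q.1.radical ≠ ⊤ := by
            rw [Ne, Ideal.radical_eq_top]
            exact Q.2.1
          obtain ⟨N, hN, hle⟩ := Ideal.exists_le_maximal _ hQtop
          exact hIM (by rw [← hun N hN]; exact hQ.trans hle)
      | univ => intro _; rfl
      | inter U V _ _ ihU ihV =>
          intro hxUV
          rw [ihU hxUV.1, ihV hxUV.2, Set.univ_inter]
      | sUnion S _ ih =>
          rintro ⟨t, htS, hxt⟩
          apply Set.eq_univ_of_univ_subset
          rw [← ih t htS hxt]
          exact Set.subset_sUnion_of_mem htS
    rw [← key U (hopen U hU𝒰) hxU]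
    exact hU𝒰
  · intro H
    obtain ⟨M₀, hM₀⟩ := Ideal.exists_maximal R
    refine ⟨M₀, hM₀, ?_⟩
    intro N hN
    by_contra hne
    set 𝒰 : Set (Set (PrimarySpectrum R)) := {(primVRad M₀)ᶜ, (primVRad N)ᶜ} with h𝒰
    have hopen : ∀ U ∈ 𝒰, IsOpen U := by
      rintro U (rfl | rfl)
      · exact TopologicalSpace.GenerateOpen.basic _ ⟨M₀, rfl⟩
      · exact TopologicalSpace.GenerateOpen.basic _ ⟨N, rfl⟩
    have hcov : ⋃₀ 𝒰 = Set.univ := by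
      apply Set.eq_univ_of_forall
      intro Q
      have hQtop : Q.1.radical ≠ ⊤ := by
        rw [Ne, Ideal.radical_eq_top]; exact Q.2.1
      by_cases h : M₀ ≤ Q.1.radical
      · refine ⟨(primVRad N)ᶜ, by simp [h𝒰], ?_⟩
        intro hN'
        have h1 : Q.1.radical = M₀ := (hM₀.eq_of_le hQtop h).symm
        have h2 : Q.1.radical = N := (hN.eq_of_le hQtop hN').symm
        exact hne (h2.symm.trans h1)
      · exact ⟨(primVRad M₀)ᶜ, by simp [h𝒰], h⟩
    have := H 𝒰 hopen hcov
    have hmem : ∀ J : Ideal R, J.IsMaximal → Set.univ ≠ (primVRad J)ᶜ := by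
      intro J hJ habs
      have : (⟨J, hJ.isPrime.isPrimary⟩ : PrimarySpectrum R) ∈ primVRad J :=
        J.le_radical
      have h2 : (⟨J, hJ.isPrime.isPrimary⟩ : PrimarySpectrum R) ∈ (primVRad J)ᶜ := by
        rw [← habs]; trivial
      exact h2 this
    rcases this with h | h
    · exact hmem M₀ hM₀ h
    · exact hmem N hN h
end
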